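/- arXiv:1703.01507 — 2 statements merged into one kernel-verified Lean document; each statement's English description precedes it below -/
import Mathlib

section
/- Let δ ∈ (0, 1/2) and suppose (x_i)_{i∈I} in ℝⁿ and (x'_i)_{i∈I} in ℝ^{n'} satisfy the (δ, n, n')-pairwise JL condition. Let k ≥ 1, let 𝔠_G be a k-optimal partition for (x_i) and let 𝔠'_G be a k-optimal partition for (x'_i). Then (n/n')·J((x'_i), 𝔠'_G) ≤ (1+δ)·J((x_i), 𝔠_G), and also (n'/n)·J((x_i), 𝔠_G) ≤ (1−δ)^{-1}·J((x'_i), 𝔠'_G). In particular, an exact k-means optimizer in the projected space is a constant-factor approximation of the k-means optimum in the original space. -/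
open Finset

variable {I : Type*} [Fintype I] [DecidableEq I]

/-- Centroid of the points indexed by the finite set `C`. -/
noncomputable def centroid {E : Type*} [NormedAddCommGroup E] [NormedSpace ℝ E]
    (y : I → E) (C : Finset I) : E :=
  (C.card : ℝ)⁻¹ • ∑ i ∈ C, y i

/-- `k`-means cost `J((y_i), 𝔠) = Σ_i ‖y_i − μ_y(𝔠(i))‖²` of a partition, written
as a sum over the blocks. -/
noncomputable def kmeansCost {E : Type*} [NormedAddCommGroup E] [NormedSpace ℝ E]
    (y : I → E) (c : Finpartition (univ : Finset I)) : ℝ :=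
  ∑ C ∈ c.parts, ∑ i ∈ C, ‖y i - centroid y C‖ ^ 2

/-- Within-cluster variance `VAR((y_i), C)`. -/
noncomputable def clVar {E : Type*} [NormedAddCommGroup E] [NormedSpace ℝ E]
    (y : I → E) (C : Finset I) : ℝ :=
  (C.card : ℝ)⁻¹ * ∑ i ∈ C, ‖y i - centroid y C‖ ^ 2

/-- The `(δ, n, n')`-pairwise Johnson–Lindenstrauss condition. -/
def JLpair (n n' : ℕ) (δ : ℝ) {I : Type*} (x : I → EuclideanSpace ℝ (Fin n))
    (x' : I → EuclideanSpace ℝ (Fin n')) : Prop :=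
  ∀ i j : I, (1 - δ) * ‖x i - x j‖ ^ 2 ≤ (n : ℝ) / n' * ‖x' i - x' j‖ ^ 2 ∧
    (n : ℝ) / n' * ‖x' i - x' j‖ ^ 2 ≤ (1 + δ) * ‖x i - x j‖ ^ 2

/-- A partition of `I` into at most `k` (automatically nonempty) blocks is `k`-optimal
for the points `y` if it minimizes the k-means cost among all such partitions. -/
def kOptimal {E : Type*} [NormedAddCommGroup E] [NormedSpace ℝ E] (k : ℕ) (y : I → E)
    (c : Finpartition (univ : Finset I)) : Prop :=
  c.parts.card ≤ k ∧ ∀ d : Finpartition (univ : Finset I), d.parts.card ≤ k →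
    kmeansCost y c ≤ kmeansCost y d

/-- A partition is k-means-stable (a local minimum of the k-means algorithm) for points `y`
if every point is at least as close to its own block's centroid as to any other centroid. -/
def kmeansStable {E : Type*} [NormedAddCommGroup E] [NormedSpace ℝ E] (y : I → E)
    (c : Finpartition (univ : Finset I)) : Prop :=
  ∀ i : I, ∀ Ci ∈ c.parts, i ∈ Ci → ∀ C ∈ c.parts,
    ‖y i - centroid y Ci‖ ≤ ‖y i - centroid y C‖

/-- `p` bounds the cluster spread of `y` with respect to the partition `c`. -/
def spreadBound {E : Type*} [NormedAddCommGroup E] [NormedSpace ℝ E] (p : ℝ) (y : I → E)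
    (c : Finpartition (univ : Finset I)) : Prop :=
  ∀ C₁ ∈ c.parts, ∀ C₂ ∈ c.parts, C₁ ≠ C₂ →
    clVar y C₁ * ((C₁.card + C₂.card : ℝ) / C₂.card)
      + clVar y C₂ * ((C₁.card + C₂.card : ℝ) / C₁.card)
      ≤ p * ‖centroid y C₁ - centroid y C₂‖ ^ 2

lemma sum_sub_centroid_eq_zero {E : Type*} [NormedAddCommGroup E] [NormedSpace ℝ E]
    (y : I → E) (C : Finset I) (hC : C.Nonempty) :
    ∑ i ∈ C, (y i - centroid y C) = 0 := by
  have hcard : (C.card : ℝ) ≠ 0 := Nat.cast_ne_zero.mpr (Finset.card_ne_zero_of_mem hC.choose_spec)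
  have : #C • _root_.centroid y C = ∑ i ∈ C, y i := by
    rw [show _root_.centroid y C = (C.card : ℝ)⁻¹ • ∑ i ∈ C, y i from rfl,
      ← Nat.cast_smul_eq_nsmul ℝ, smul_smul, mul_inv_cancel₀ hcard, one_smul]
  simp only [Finset.sum_sub_distrib, Finset.sum_const, this, sub_self]

lemma key_identity {E : Type*} [NormedAddCommGroup E] [InnerProductSpace ℝ E]
    (y : I → E) (C : Finset I) :
    ∑ i ∈ C, ∑ j ∈ C, ‖y i - y j‖ ^ 2
      = (2 * C.card : ℝ) * ∑ i ∈ C, ‖y i - centroid y C‖ ^ 2 := by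
  rcases C.eq_empty_or_nonempty with rfl | hC
  · simp
  · have hsum := sum_sub_centroid_eq_zero y C hC
    have h : ∀ i j, ‖y i - y j‖ ^ 2
        = ‖y i - centroid y C‖ ^ 2 + ‖y j - centroid y C‖ ^ 2
          - 2 * inner ℝ (y i - centroid y C) (y j - centroid y C) := by
      intro i j
      have : y i - y j = (y i - centroid y C) - (y j - centroid y C) := by abel
      rw [this, norm_sub_sq_real]
      ring
    calc ∑ i ∈ C, ∑ j ∈ C, ‖y i - y j‖ ^ 2
        = ∑ i ∈ C, ∑ j ∈ C, (‖y i - centroid y C‖ ^ 2 + ‖y j - centroid y C‖ ^ 2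
            - 2 * inner ℝ (y i - centroid y C) (y j - centroid y C)) := by
          exact Finset.sum_congr rfl fun i _ => Finset.sum_congr rfl fun j _ => h i j
      _ = (2 * C.card : ℝ) * ∑ i ∈ C, ‖y i - centroid y C‖ ^ 2 := by
          have hz : ∑ i ∈ C, ∑ j ∈ C,
              (inner ℝ (y i - _root_.centroid y C) (y j - _root_.centroid y C) : ℝ) = 0 := by
            simp_rw [← inner_sum, hsum, inner_zero_right, Finset.sum_const_zero]
          simp only [Finset.sum_sub_distrib, Finset.sum_add_distrib, Finset.sum_const,
            ← Finset.mul_sum, nsmul_eq_mul, hz, mul_zero, sub_zero]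
          ring

lemma cost_sandwich {n n' : ℕ} {δ : ℝ}
    (x : I → EuclideanSpace ℝ (Fin n)) (x' : I → EuclideanSpace ℝ (Fin n'))
    (hJL : JLpair n n' δ x x') (c : Finpartition (univ : Finset I)) :
    (1 - δ) * kmeansCost x c ≤ (n : ℝ) / n' * kmeansCost x' c ∧
      (n : ℝ) / n' * kmeansCost x' c ≤ (1 + δ) * kmeansCost x c := by
  have hblock : ∀ C ∈ c.parts,
      (1 - δ) * ∑ i ∈ C, ‖x i - centroid x C‖ ^ 2
        ≤ (n : ℝ) / n' * ∑ i ∈ C, ‖x' i - centroid x' C‖ ^ 2 ∧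
      (n : ℝ) / n' * ∑ i ∈ C, ‖x' i - centroid x' C‖ ^ 2
        ≤ (1 + δ) * ∑ i ∈ C, ‖x i - centroid x C‖ ^ 2 := by
    intro C hCmem
    have hC : C.Nonempty := c.nonempty_of_mem_parts hCmem
    have hcard : (0 : ℝ) < 2 * C.card := by
      have := hC.card_pos; positivity
    have h1 : (1 - δ) * ∑ i ∈ C, ∑ j ∈ C, ‖x i - x j‖ ^ 2
        ≤ (n : ℝ) / n' * ∑ i ∈ C, ∑ j ∈ C, ‖x' i - x' j‖ ^ 2 := by
      rw [Finset.mul_sum, Finset.mul_sum]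
      refine Finset.sum_le_sum fun i _ => ?_
      rw [Finset.mul_sum, Finset.mul_sum]
      exact Finset.sum_le_sum fun j _ => (hJL i j).1
    have h2 : (n : ℝ) / n' * ∑ i ∈ C, ∑ j ∈ C, ‖x' i - x' j‖ ^ 2
        ≤ (1 + δ) * ∑ i ∈ C, ∑ j ∈ C, ‖x i - x j‖ ^ 2 := by
      rw [Finset.mul_sum, Finset.mul_sum]
      refine Finset.sum_le_sum fun i _ => ?_
      rw [Finset.mul_sum, Finset.mul_sum]
      exact Finset.sum_le_sum fun j _ => (hJL i j).2
    rw [key_identity x C, key_identity x' C] at h1 h2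
    constructor
    · have := (mul_le_mul_iff_of_pos_left hcard).mp (by linarith [h1] : (2 * C.card : ℝ) * ((1 - δ) * ∑ i ∈ C, ‖x i - centroid x C‖ ^ 2) ≤ (2 * C.card : ℝ) * ((n : ℝ) / n' * ∑ i ∈ C, ‖x' i - centroid x' C‖ ^ 2))
      exact this
    · have := (mul_le_mul_iff_of_pos_left hcard).mp (by linarith [h2] : (2 * C.card : ℝ) * ((n : ℝ) / n' * ∑ i ∈ C, ‖x' i - centroid x' C‖ ^ 2) ≤ (2 * C.card : ℝ) * ((1 + δ) * ∑ i ∈ C, ‖x i - centroid x C‖ ^ 2))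
      exact this
  unfold kmeansCost
  constructor
  · rw [Finset.mul_sum, Finset.mul_sum]
    exact Finset.sum_le_sum fun C hC => (hblock C hC).1
  · rw [Finset.mul_sum, Finset.mul_sum]
    exact Finset.sum_le_sum fun C hC => (hblock C hC).2

/-- A perfect k-means optimizer in the projected space is a constant factor approximation
of the k-means optimum in the original space, and vice versa. -/
theorem global_min_approx {n n' : ℕ} (hn'0 : 0 < n') (hn'n : n' < n)
    {δ : ℝ} (hδ0 : 0 < δ) (hδ : δ < 1 / 2)
    {I : Type*} [Fintype I] [DecidableEq I]
    (x : I → EuclideanSpace ℝ (Fin n)) (x' : I → EuclideanSpace ℝ (Fin n'))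
    (hJL : JLpair n n' δ x x') (k : ℕ) (hk : 1 ≤ k)
    (cG c'G : Finpartition (univ : Finset I))
    (hcG : kOptimal k x cG) (hc'G : kOptimal k x' c'G) :
    (n : ℝ) / n' * kmeansCost x' c'G ≤ (1 + δ) * kmeansCost x cG ∧
    (n' : ℝ) / n * kmeansCost x cG ≤ (1 - δ)⁻¹ * kmeansCost x' c'G := by
  have hn0 : (0:ℝ) < n := by exact_mod_cast hn'0.trans hn'n
  have hn'0r : (0:ℝ) < n' := by exact_mod_cast hn'0
  have hδ1 : (0:ℝ) < 1 - δ := by linarith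
  constructor
  · calc (n:ℝ)/n' * kmeansCost x' c'G ≤ (n:ℝ)/n' * kmeansCost x' cG :=
        mul_le_mul_of_nonneg_left (hc'G.2 cG hcG.1) (by positivity)
      _ ≤ (1+δ) * kmeansCost x cG := (cost_sandwich x x' hJL cG).2
  · have h1 : (1-δ) * kmeansCost x cG ≤ (n:ℝ)/n' * kmeansCost x' c'G := by
      calc (1-δ) * kmeansCost x cG ≤ (1-δ) * kmeansCost x c'G :=
          mul_le_mul_of_nonneg_left (hcG.2 c'G hc'G.1) (by linarith)
        _ ≤ _ := (cost_sandwich x x' hJL c'G).1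
    have key : (1-δ) * ((n':ℝ)/n * kmeansCost x cG) ≤ kmeansCost x' c'G := by
      have h2 := mul_le_mul_of_nonneg_left h1 (le_of_lt (div_pos hn'0r hn0))
      calc (1-δ) * ((n':ℝ)/n * kmeansCost x cG)
          = (n':ℝ)/n * ((1-δ) * kmeansCost x cG) := by ring
        _ ≤ (n':ℝ)/n * ((n:ℝ)/n' * kmeansCost x' c'G) := h2
        _ = kmeansCost x' c'G := by field_simp
    rw [inv_mul_eq_div, le_div_iff₀ hδ1]
    nlinarith [key]
end

section
/- Let δ ∈ (0, 1/2) and suppose (x_i)_{i∈I} in ℝⁿ and (x'_i)_{i∈I} in ℝ^{n'} satisfy the (δ, n, n')-pairwise JL condition. Let k ≥ 1, c > 1, σ > 0, and let d be any real-valued function on pairs of partitions of I. Suppose (x_i) has the (c, σ)-approximation-stability property with respect to d: for all partitions A, B of I into at most k nonempty blocks, if J((x_i), A) < c·J((x_i), B) and J((x_i), B) < c·J((x_i), A), then d(A, B) ≤ σ. Then (x'_i) has the (c·(1−δ)/(1+δ), σ)-approximation-stability property: for all such partitions A, B, if J((x'_i), A) < c·((1−δ)/(1+δ))·J((x'_i),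 B) and J((x'_i), B) < c·((1−δ)/(1+δ))·J((x'_i), A), then d(A, B) ≤ σ. -/
open Finset

variable {I : Type*} [Fintype I] [DecidableEq I]

lemma block_identity {E : Type*} [NormedAddCommGroup E] [InnerProductSpace ℝ E]
    (y : I → E) (C : Finset I) :
    ∑ i ∈ C, ‖y i - _root_.centroid y C‖ ^ 2
      = (2 * C.card : ℝ)⁻¹ * ∑ i ∈ C, ∑ j ∈ C, ‖y i - y j‖ ^ 2 := by
  rcases C.eq_empty_or_nonempty with rfl | hC
  · simp
  have hm : (0 : ℝ) < C.card := by exact_mod_cast Finset.card_pos.mpr hC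
  set m : ℝ := (C.card : ℝ) with hmdef
  set S : E := ∑ i ∈ C, y i with hSdef
  have hcen : _root_.centroid y C = m⁻¹ • S := rfl
  have h1 : ∑ i ∈ C, ‖y i - _root_.centroid y C‖ ^ 2
      = ∑ i ∈ C, ‖y i‖ ^ 2 - m⁻¹ * ‖S‖ ^ 2 := by
    have hexp : ∀ i ∈ C, ‖y i - _root_.centroid y C‖ ^ 2
        = ‖y i‖ ^ 2 - 2 * inner ℝ (y i) (_root_.centroid y C) + ‖_root_.centroid y C‖ ^ 2 := by
      intro i _
      rw [norm_sub_sq_real]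
    rw [Finset.sum_congr rfl hexp]
    rw [Finset.sum_add_distrib, Finset.sum_sub_distrib, Finset.sum_const, nsmul_eq_mul]
    have hin : ∑ i ∈ C, (2 : ℝ) * inner ℝ (y i) (_root_.centroid y C)
        = 2 * (m⁻¹ * ‖S‖ ^ 2) := by
      rw [← Finset.mul_sum, ← sum_inner, hcen, real_inner_smul_right,
        real_inner_self_eq_norm_sq]
    have hnc : ‖_root_.centroid y C‖ ^ 2 = m⁻¹ * (m⁻¹ * ‖S‖ ^ 2) := by
      rw [hcen, norm_smul, mul_pow, Real.norm_eq_abs, abs_of_pos (inv_pos.mpr hm)]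
      ring
    rw [hin, hnc]
    field_simp
    ring
  have h2 : ∑ i ∈ C, ∑ j ∈ C, ‖y i - y j‖ ^ 2
      = 2 * m * ∑ i ∈ C, ‖y i‖ ^ 2 - 2 * ‖S‖ ^ 2 := by
    have hexp : ∀ i ∈ C, ∑ j ∈ C, ‖y i - y j‖ ^ 2
        = m * ‖y i‖ ^ 2 - 2 * inner ℝ (y i) S + ∑ j ∈ C, ‖y j‖ ^ 2 := by
      intro i _
      have : ∀ j ∈ C, ‖y i - y j‖ ^ 2
          = ‖y i‖ ^ 2 - 2 * inner ℝ (y i) (y j) + ‖y j‖ ^ 2 := fun j _ => norm_sub_sq_real _ _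
      rw [Finset.sum_congr rfl this, Finset.sum_add_distrib, Finset.sum_sub_distrib,
        Finset.sum_const, nsmul_eq_mul, ← Finset.mul_sum, ← inner_sum]
    rw [Finset.sum_congr rfl hexp, Finset.sum_add_distrib, Finset.sum_sub_distrib,
      Finset.sum_const, nsmul_eq_mul, ← Finset.mul_sum, ← Finset.mul_sum, ← sum_inner,
      real_inner_self_eq_norm_sq]
    ring
  rw [h1, h2]
  field_simp


set_option linter.unusedSectionVars false

lemma cost_pairwise {E : Type*} [NormedAddCommGroup E] [InnerProductSpace ℝ E]
    (y : I → E) (A : Finpartition (univ : Finset I)) :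
    kmeansCost y A
      = ∑ C ∈ A.parts, (2 * C.card : ℝ)⁻¹ * ∑ i ∈ C, ∑ j ∈ C, ‖y i - y j‖ ^ 2 :=
  Finset.sum_congr rfl fun C _ => block_identity y C

lemma kmeansCost_nonneg {E : Type*} [NormedAddCommGroup E] [NormedSpace ℝ E]
    (y : I → E) (A : Finpartition (univ : Finset I)) : 0 ≤ kmeansCost y A := by
  apply Finset.sum_nonneg; intro C _; apply Finset.sum_nonneg; intro i _; positivity

/-- (c, σ)-approximation-stability is transmitted to the projected space, with the factor
`c` weakened to `c·(1−δ)/(1+δ)`. -/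
theorem approximation_stability_preserved {n n' : ℕ} (hn'0 : 0 < n') (hn'n : n' < n)
    {δ : ℝ} (hδ0 : 0 < δ) (hδ : δ < 1 / 2)
    {I : Type*} [Fintype I] [DecidableEq I]
    (x : I → EuclideanSpace ℝ (Fin n)) (x' : I → EuclideanSpace ℝ (Fin n'))
    (hJL : JLpair n n' δ x x') (k : ℕ) (hk : 1 ≤ k) (c σ : ℝ) (hc : 1 < c) (hσ : 0 < σ)
    (dist : Finpartition (univ : Finset I) → Finpartition (univ : Finset I) → ℝ)
    (hstab : ∀ A B : Finpartition (univ : Finset I),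
      A.parts.card ≤ k → B.parts.card ≤ k →
      kmeansCost x A < c * kmeansCost x B → kmeansCost x B < c * kmeansCost x A →
      dist A B ≤ σ) :
    ∀ A B : Finpartition (univ : Finset I),
      A.parts.card ≤ k → B.parts.card ≤ k →
      kmeansCost x' A < c * ((1 - δ) / (1 + δ)) * kmeansCost x' B →
      kmeansCost x' B < c * ((1 - δ) / (1 + δ)) * kmeansCost x' A →
      dist A B ≤ σ := by
  have h1δ : (0 : ℝ) < 1 - δ := by linarith
  have h1δ' : (0 : ℝ) < 1 + δ := by linarith
  have hr : (0 : ℝ) < (n : ℝ) / n' := by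
    have hn : 0 < n := hn'0.trans hn'n
    apply div_pos <;> [exact_mod_cast hn; exact_mod_cast hn'0]
  have key : ∀ A : Finpartition (univ : Finset I),
      (1 - δ) * kmeansCost x A ≤ (n : ℝ) / n' * kmeansCost x' A ∧
      (n : ℝ) / n' * kmeansCost x' A ≤ (1 + δ) * kmeansCost x A := by
    intro A
    rw [cost_pairwise x A, cost_pairwise x' A]
    constructor <;>
    · rw [Finset.mul_sum, Finset.mul_sum]
      apply Finset.sum_le_sum
      intro C _
      rw [← mul_assoc, mul_comm _ (2 * (C.card : ℝ))⁻¹, ← mul_assoc,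
        mul_comm _ (2 * (C.card : ℝ))⁻¹, mul_assoc, mul_assoc]
      apply mul_le_mul_of_nonneg_left _ (by positivity)
      rw [Finset.mul_sum, Finset.mul_sum]
      refine Finset.sum_le_sum fun i _ => ?_
      rw [Finset.mul_sum, Finset.mul_sum]
      refine Finset.sum_le_sum fun j _ => ?_
      first
        | exact (hJL i j).1
        | exact (hJL i j).2
  intro A B hAk hBk hA hB
  obtain ⟨hA1, hA2⟩ := key A
  obtain ⟨hB1, hB2⟩ := key B
  have hcpos : (0 : ℝ) < c * ((1 - δ) / (1 + δ)) := by positivity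
  apply hstab A B hAk hBk
  · have chain : (1 - δ) * kmeansCost x A < c * (1 - δ) * kmeansCost x B := by
      calc (1 - δ) * kmeansCost x A ≤ (n : ℝ) / n' * kmeansCost x' A := hA1
        _ < (n : ℝ) / n' * (c * ((1 - δ) / (1 + δ)) * kmeansCost x' B) :=
            mul_lt_mul_of_pos_left hA hr
        _ = c * ((1 - δ) / (1 + δ)) * ((n : ℝ) / n' * kmeansCost x' B) := by ring
        _ ≤ c * ((1 - δ) / (1 + δ)) * ((1 + δ) * kmeansCost x B) :=
            mul_le_mul_of_nonneg_left hB2 hcpos.le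
        _ = c * (1 - δ) * kmeansCost x B := by field_simp
    have := (mul_lt_mul_iff_right₀ h1δ).mp (by linarith [chain] : (1 - δ) * kmeansCost x A < (1 - δ) * (c * kmeansCost x B))
    exact this
  · have chain : (1 - δ) * kmeansCost x B < c * (1 - δ) * kmeansCost x A := by
      calc (1 - δ) * kmeansCost x B ≤ (n : ℝ) / n' * kmeansCost x' B := hB1
        _ < (n : ℝ) / n' * (c * ((1 - δ) / (1 + δ)) * kmeansCost x' A) :=
            mul_lt_mul_of_pos_left hB hr
        _ = c * ((1 - δ) / (1 + δ)) * ((n : ℝ) / n' * kmeansCost x' A) := by ring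
        _ ≤ c * ((1 - δ) / (1 + δ)) * ((1 + δ) * kmeansCost x A) :=
            mul_le_mul_of_nonneg_left hA2 hcpos.le
        _ = c * (1 - δ) * kmeansCost x A := by field_simp
    exact (mul_lt_mul_iff_right₀ h1δ).mp (by linarith [chain])
end
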